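/- Let (X, d_X) and (Y, d_Y) be finite metric spaces, let f : X → Y be an injective nonexpansive map, let δ ≥ 0, and let k ≥ 1 be an integer. Then every maximal k-vertex-connected subset of X (with respect to the δ-threshold graph of X) is contained in f⁻¹(B) for some maximal k-vertex-connected subset B of Y (with respect to the δ-threshold graph of Y); that is, VL^k_δ(X) refines f⁻¹(VL^k_δ(Y)), so VL^k_δ is functorial for injective nonexpansive maps. -/

import Mathlib

/-- A nonexpansive map between metric spaces. -/
def Nonexpansive {X Y : Type*} [MetricSpace X] [MetricSpace Y] (f : X → Y) : Prop :=
  ∀ x x' : X, dist (f x) (f x') ≤ dist x x'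

/-- The `δ`-threshold graph of a metric space: distinct points are adjacent
iff their distance is at most `δ`. -/
def thresholdGraph (X : Type*) [MetricSpace X] (δ : ℝ) : SimpleGraph X where
  Adj x y := x ≠ y ∧ dist x y ≤ δ
  symm := ⟨fun x y h => ⟨h.1.symm, by rw [dist_comm]; exact h.2⟩⟩
  loopless := ⟨fun x h => h.1 rfl⟩

/-- `A` is `k`-vertex-connected w.r.t. `G`: the induced subgraph `G[A]` is connected,
and removing any fewer than `k` vertices from `A` leaves it connected or empty. -/
def IsKVertexConnected {X : Type*} (G : SimpleGraph X) (k : ℕ) (A : Set X) : Prop :=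
  (G.induce A).Connected ∧
    ∀ S : Set X, S ⊆ A → S.ncard < k →
      ((G.induce (A \ S)).Connected ∨ A \ S = ∅)

/-- A maximal `k`-vertex-connected subset. -/
def IsMaxKVertexConnected {X : Type*} (G : SimpleGraph X) (k : ℕ) (A : Set X) : Prop :=
  IsKVertexConnected G k A ∧
    ∀ B : Set X, IsKVertexConnected G k B → A ⊆ B → A = B

section aux

variable {X Y : Type*} [MetricSpace X] [MetricSpace Y]

lemma conn_image (f : X → Y) (hinj : Function.Injective f) (hf : Nonexpansive f)
    (δ : ℝ) {A : Set X} (h : ((thresholdGraph X δ).induce A).Connected) :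
    ((thresholdGraph Y δ).induce (f '' A)).Connected := by
  refine h.map ⟨fun a => ⟨f a.1, a.1, a.2, rfl⟩, ?_⟩ ?_
  · rintro ⟨a, ha⟩ ⟨b, hb⟩ hab
    obtain ⟨hne, hd⟩ : a ≠ b ∧ dist a b ≤ δ := hab
    exact (show f a ≠ f b ∧ dist (f a) (f b) ≤ δ from ⟨fun e => hne (hinj e), le_trans (hf a b) hd⟩)
  · rintro ⟨y, a, ha, rfl⟩
    exact ⟨⟨a, ha⟩, rfl⟩

lemma kconn_image (f : X → Y) (hinj : Function.Injective f) (hf : Nonexpansive f)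
    (δ : ℝ) (k : ℕ) {A : Set X} [Fintype X] (h : IsKVertexConnected (thresholdGraph X δ) k A) :
    IsKVertexConnected (thresholdGraph Y δ) k (f '' A) := by
  refine ⟨conn_image f hinj hf δ h.1, fun S hS hSk => ?_⟩
  have hfin : S.Finite := (A.toFinite.image f).subset hS
  set S' := f ⁻¹' S ∩ A with hS'
  have hS'A : S' ⊆ A := Set.inter_subset_right
  have himg : f '' S' = S := by
    rw [hS', Set.image_preimage_inter, Set.inter_eq_left.mpr hS]
  have hS'k : S'.ncard < k := by
    have := Set.ncard_image_of_injective S' hinj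
    rw [himg] at this
    omega
  have hdiff : f '' (A \ S') = f '' A \ S := by
    rw [Set.image_diff hinj, himg]
  rcases h.2 S' hS'A hS'k with hc | he
  · left
    rw [← hdiff]
    exact conn_image f hinj hf δ hc
  · right
    rw [← hdiff, he, Set.image_empty]

end aux

/-- `VL^k_δ` is functorial for injective nonexpansive maps: every maximal
`k`-vertex-connected subset of `X` (w.r.t. the `δ`-threshold graph) is contained in
`f⁻¹(B)` for some maximal `k`-vertex-connected subset `B` of `Y`. -/
theorem VL_functorial_inj {X Y : Type*}
    [MetricSpace X] [Fintype X] [Nonempty X]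
    [MetricSpace Y] [Fintype Y] [Nonempty Y]
    (f : X → Y) (hinj : Function.Injective f) (hf : Nonexpansive f)
    (δ : ℝ) (hδ : 0 ≤ δ) (k : ℕ) (hk : 1 ≤ k) :
    ∀ A : Set X, IsMaxKVertexConnected (thresholdGraph X δ) k A →
      ∃ B : Set Y, IsMaxKVertexConnected (thresholdGraph Y δ) k B ∧ A ⊆ f ⁻¹' B := by
  intro A hA
  have hfa : IsKVertexConnected (thresholdGraph Y δ) k (f '' A) :=
    kconn_image f hinj hf δ k hA.1
  -- pick a k-vertex-connected superset of f '' A of maximal cardinality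
  set 𝒞 : Set (Set Y) :=
    {B | IsKVertexConnected (thresholdGraph Y δ) k B ∧ f '' A ⊆ B} with h𝒞
  have hne : 𝒞.Nonempty := ⟨f '' A, hfa, le_refl _⟩
  have hfin : 𝒞.Finite := Set.toFinite _
  obtain ⟨B, hB, hBmax0⟩ := Set.Finite.exists_maximalFor Set.ncard 𝒞 hfin hne
  have hBmax : ∀ B' ∈ 𝒞, B.ncard ≤ B'.ncard → B.ncard = B'.ncard :=
    fun B' h1 h2 => le_antisymm h2 (hBmax0 h1 h2)
  refine ⟨B, ⟨hB.1, fun B' hB' hBB' => ?_⟩, ?_⟩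
  · have hB'mem : B' ∈ 𝒞 := ⟨hB', hB.2.trans hBB'⟩
    have hle : B.ncard ≤ B'.ncard := Set.ncard_le_ncard hBB' B'.toFinite
    exact Set.eq_of_subset_of_ncard_le hBB'
      (le_of_eq (hBmax B' hB'mem hle).symm) B'.toFinite
  · intro a ha
    exact hB.2 ⟨a, ha, rfl⟩
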